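/- arXiv:math/9908145 — 2 statements merged into one kernel-verified Lean document; each statement's English description precedes it below -/
import Mathlib

section
/- For any real \(\alpha\), any real p, and every nonnegative integer n, one has \(L_n^{(\alpha-p)}(x) = \sum_{k=0}^n (-1)^k \binom{p}{k} L_{n-k}^{(\alpha)}(x)\) as an identity of polynomials in x. -/
open Finset

/-- Rising factorial (Pochhammer symbol) `(x)_k = x(x+1)⋯(x+k-1)`. -/
noncomputable def poch (x : ℝ) (k : ℕ) : ℝ := (ascPochhammer ℝ k).eval x

/-- Generalized binomial coefficient `C(y, m) = (y-m+1)_m / m!` for real `y`. -/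
noncomputable def gbinom (y : ℝ) (m : ℕ) : ℝ := poch (y - m + 1) m / m.factorial

/-- Generalized binomial coefficient with integer lower index, zero for negative index. -/
noncomputable def gbinomZ (y : ℝ) (m : ℤ) : ℝ := if 0 ≤ m then gbinom y m.toNat else 0

/-- Generalized Laguerre polynomial `L_n^{(a)}(x)`, defined for all real `a`. -/
noncomputable def Lag (n : ℕ) (a : ℝ) (x : ℝ) : ℝ :=
  ∑ k ∈ range (n + 1),
    (-1 : ℝ) ^ k * poch (a + k + 1) (n - k) / (n - k).factorial * x ^ k / k.factorial

lemma poch_zero (x : ℝ) : poch x 0 = 1 := by simp [poch]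

lemma poch_succ_right (z : ℝ) (j : ℕ) : poch z (j + 1) = poch z j * (z + j) := by
  simp [poch, ascPochhammer_succ_right]

lemma poch_succ_left (z : ℝ) (j : ℕ) : poch z (j + 1) = z * poch (z + 1) j := by
  simp [poch, ascPochhammer_succ_left, Polynomial.eval_comp]

/-- Vandermonde identity for rising factorials. -/
lemma poch_add (m : ℕ) : ∀ x y : ℝ,
    poch (x + y) m = ∑ k ∈ range (m + 1),
      (m.choose k : ℝ) * poch x k * poch y (m - k) := by
  induction m with
  | zero => intro x y; simp [poch]
  | succ m ih =>
    intro x y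
    have h1 : poch (x + y) (m + 1) = poch (x + y) m * (x + y + m) := poch_succ_right _ _
    rw [h1, ih]
    have expand : (∑ k ∈ range (m + 1), (m.choose k : ℝ) * poch x k * poch y (m - k))
        * (x + y + m)
        = (∑ k ∈ range (m + 1), (m.choose k : ℝ) * poch x (k + 1) * poch y (m - k))
          + ∑ k ∈ range (m + 1), (m.choose k : ℝ) * poch x k * poch y (m - k + 1) := by
      rw [sum_mul, ← sum_add_distrib]
      refine sum_congr rfl fun k hk => ?_
      have hk' : k ≤ m := by simpa [Nat.lt_succ_iff] using hk
      have hxy : x + y + m = (x + k) + (y + (m - k : ℕ)) := by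
        have : ((m - k : ℕ) : ℝ) = (m : ℝ) - k := by
          push_cast [Nat.cast_sub hk']; ring
        rw [this]; ring
      rw [hxy, mul_add, poch_succ_right x k, poch_succ_right y (m - k)]
      ring
    rw [expand]
    have hS2 : ∑ k ∈ range (m + 1), (m.choose k : ℝ) * poch x k * poch y (m - k + 1)
        = (∑ k ∈ range (m + 1), (m.choose (k + 1) : ℝ) * poch x (k + 1) * poch y (m - k))
          + poch y (m + 1) := by
      rw [Finset.sum_range_succ' (fun k => (m.choose k : ℝ) * poch x k * poch y (m - k + 1))]
      have : ∑ k ∈ range (m + 1), (m.choose (k + 1) : ℝ) * poch x (k + 1) * poch y (m - k)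
          = ∑ k ∈ range m, (m.choose (k + 1) : ℝ) * poch x (k + 1) * poch y (m - (k + 1) + 1) := by
        rw [Finset.sum_range_succ]
        simp only [Nat.choose_succ_self, Nat.cast_zero, zero_mul, add_zero]
        refine sum_congr rfl fun k hk => ?_
        have hk' : k < m := mem_range.mp hk
        congr 2
        omega
      rw [this, poch_zero]
      simp
    rw [hS2]
    rw [Finset.sum_range_succ' (fun k => ((m + 1).choose k : ℝ) * poch x k * poch y (m + 1 - k))]
    have : ∀ k ∈ range (m + 1),
        ((m + 1).choose (k + 1) : ℝ) * poch x (k + 1) * poch y (m + 1 - (k + 1))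
        = (m.choose k : ℝ) * poch x (k + 1) * poch y (m - k)
          + (m.choose (k + 1) : ℝ) * poch x (k + 1) * poch y (m - k) := by
      intro k _
      have hp : (m + 1).choose (k + 1) = m.choose k + m.choose (k + 1) := Nat.choose_succ_succ m k
      have hsub : m + 1 - (k + 1) = m - k := by omega
      rw [hp, hsub]; push_cast; ring
    rw [Finset.sum_congr rfl this, sum_add_distrib, Nat.choose_zero_right, poch_zero]
    push_cast
    ring

lemma poch_neg (k : ℕ) : ∀ p : ℝ, poch (-p) k = (-1 : ℝ) ^ k * poch (p - k + 1) k := by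
  induction k with
  | zero => intro p; simp [poch]
  | succ k ih =>
    intro p
    rw [poch_succ_left (-p) k]
    have : -p + 1 = -(p - 1) := by ring
    rw [this, ih (p - 1)]
    have hr : poch (p - (k + 1 : ℕ) + 1) (k + 1) = poch (p - (k + 1 : ℕ) + 1) k
        * (p - (k + 1 : ℕ) + 1 + k) := poch_succ_right _ _
    rw [hr]
    have h2 : p - 1 - (k : ℕ) + 1 = p - ((k + 1 : ℕ) : ℝ) + 1 := by push_cast; ring
    have h3 : p - ((k + 1 : ℕ) : ℝ) + 1 + (k : ℕ) = p := by push_cast; ring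
    rw [h2, h3]
    ring

/-- Key coefficient identity. -/
lemma key (m : ℕ) (b p : ℝ) :
    poch (b - p) m / m.factorial
      = ∑ k ∈ range (m + 1), (-1 : ℝ) ^ k * gbinom p k * (poch b (m - k) / (m - k).factorial) := by
  have hbp : b - p = -p + b := by ring
  rw [hbp, poch_add m (-p) b, Finset.sum_div]
  refine sum_congr rfl fun k hk => ?_
  have hk' : k ≤ m := by simpa [Nat.lt_succ_iff] using hk
  have hch : (m.choose k : ℝ) * k.factorial * (m - k).factorial = m.factorial := by
    exact_mod_cast congrArg (Nat.cast : ℕ → ℝ) (Nat.choose_mul_factorial_mul_factorial hk')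
  have hfk : (k.factorial : ℝ) ≠ 0 := by exact_mod_cast k.factorial_ne_zero
  have hfmk : ((m - k).factorial : ℝ) ≠ 0 := by exact_mod_cast (m - k).factorial_ne_zero
  have hfm : (m.factorial : ℝ) ≠ 0 := by exact_mod_cast m.factorial_ne_zero
  rw [poch_neg k p]
  unfold gbinom
  field_simp
  rw [← hch]
  ring

theorem laguerre_parameter_shift (a p : ℝ) (n : ℕ) (x : ℝ) :
    Lag n (a - p) x = ∑ k ∈ range (n + 1), (-1 : ℝ) ^ k * gbinom p k * Lag (n - k) a x := by
  unfold Lag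
  have hrw : ∀ k ∈ range (n + 1),
      (-1 : ℝ) ^ k * gbinom p k * ∑ j ∈ range (n - k + 1),
        (-1 : ℝ) ^ j * poch (a + j + 1) (n - k - j) / (n - k - j).factorial * x ^ j / j.factorial
      = ∑ j ∈ range (n - k + 1), (-1 : ℝ) ^ k * gbinom p k *
        ((-1 : ℝ) ^ j * poch (a + j + 1) (n - k - j) / (n - k - j).factorial * x ^ j / j.factorial) := by
    intro k _; rw [Finset.mul_sum]
  rw [Finset.sum_congr rfl hrw]
  rw [Finset.sum_comm' (t' := range (n + 1)) (s' := fun j => range (n - j + 1))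
    (by intro k j; simp only [mem_range, Nat.lt_succ_iff]; omega)]
  refine sum_congr rfl fun j hj => ?_
  have hj' : j ≤ n := by simpa [Nat.lt_succ_iff] using hj
  have inner : ∑ k ∈ range (n - j + 1), (-1 : ℝ) ^ k * gbinom p k *
      ((-1 : ℝ) ^ j * poch (a + j + 1) (n - k - j) / (n - k - j).factorial * x ^ j / j.factorial)
      = ((-1 : ℝ) ^ j * x ^ j / j.factorial) *
        ∑ k ∈ range (n - j + 1), (-1 : ℝ) ^ k * gbinom p k *
          (poch (a + j + 1) (n - j - k) / (n - j - k).factorial) := by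
    rw [Finset.mul_sum]
    refine sum_congr rfl fun k _ => ?_
    have : n - k - j = n - j - k := by omega
    rw [this]; ring
  rw [inner, ← key (n - j) (a + j + 1) p]
  have : a + (j : ℝ) + 1 - p = a - p + j + 1 := by ring
  rw [this]
  ring
end

section
/- For every real \(\alpha\) and nonnegative integer i, \(\sum_{j=0}^i \binom{j+\alpha+2}{j}\, L_{i-j}^{(-\alpha-i-3)}(-x) = \frac{x^i}{i!}\), as an identity of polynomials in x. -/
open Finset

lemma gbinom_eq_choose (y : ℝ) (n : ℕ) : gbinom y n = Ring.choose y n := by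
  have h := Ring.descPochhammer_eq_factorial_smul_choose y n
  rw [Polynomial.descPochhammer_smeval_eq_ascPochhammer,
    Polynomial.ascPochhammer_smeval_eq_eval] at h
  unfold gbinom poch
  rw [h, nsmul_eq_mul, mul_div_cancel_left₀]
  exact_mod_cast n.factorial_ne_zero

lemma gbinom_vandermonde (a b : ℝ) (m : ℕ) :
    ∑ j ∈ range (m + 1), gbinom a j * gbinom b (m - j) = gbinom (a + b) m := by
  simp only [gbinom_eq_choose]
  rw [Ring.add_choose_eq m (Commute.all a b),
    Finset.Nat.sum_antidiagonal_eq_sum_range_succ_mk]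

lemma poch_div_factorial (y : ℝ) (n : ℕ) :
    poch y n / n.factorial = gbinom (y + n - 1) n := by
  unfold gbinom
  rw [show y + n - 1 - n + 1 = y by ring]

lemma gbinom_neg (y : ℝ) (n : ℕ) : gbinom (-y) n = (-1) ^ n * gbinom (y + n - 1) n := by
  unfold gbinom poch
  rw [show -y - n + 1 = -(y + n - 1) by ring,
    ascPochhammer_eval_neg_eq_descPochhammer,
    descPochhammer_eval_eq_ascPochhammer, show y + (n:ℝ) - 1 - n + 1 = y by ring,
    mul_div_assoc]

lemma key_s14 (a : ℝ) (m : ℕ) :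
    ∑ j ∈ range (m + 1), gbinom (a + j) j * gbinom (-a - 1 - j) (m - j)
      = if m = 0 then 1 else 0 := by
  have step : ∀ j ∈ range (m + 1),
      gbinom (a + j) j * gbinom (-a - 1 - j) (m - j)
        = (-1 : ℝ) ^ m * (gbinom (-(a + 1)) j * gbinom (a + m) (m - j)) := by
    intro j hj
    have hjm : j ≤ m := Nat.lt_succ_iff.mp (mem_range.mp hj)
    have h1 : gbinom (-(a + 1)) j = (-1) ^ j * gbinom (a + j) j := by
      rw [gbinom_neg, show a + 1 + j - 1 = a + j by ring]
    have h2 : gbinom (-a - 1 - j) (m - j) = (-1) ^ (m - j) * gbinom (a + m) (m - j) := by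
      rw [show -a - 1 - (j:ℝ) = -(a + 1 + j) by ring, gbinom_neg]
      congr 2
      have : ((m - j : ℕ) : ℝ) = (m : ℝ) - j := by
        rw [Nat.cast_sub hjm]
      rw [this]; ring
    have h3 : gbinom (a + j) j = (-1 : ℝ) ^ j * gbinom (-(a + 1)) j := by
      rw [h1, ← mul_assoc, ← mul_pow]; simp
    rw [h3, h2]
    rw [show ((-1:ℝ)^j * gbinom (-(a+1)) j) * ((-1)^(m-j) * gbinom (a+m) (m-j))
        = ((-1:ℝ)^j * (-1)^(m-j)) * (gbinom (-(a+1)) j * gbinom (a+m) (m-j)) by ring,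
      ← pow_add, Nat.add_sub_cancel' hjm]
  rw [Finset.sum_congr rfl step, ← Finset.mul_sum, gbinom_vandermonde]
  have : -(a + 1) + (a + m) = (m : ℝ) - 1 := by ring
  rw [this]
  unfold gbinom poch
  rw [show (m:ℝ) - 1 - m + 1 = 0 by ring, ascPochhammer_eval_zero]
  rcases Nat.eq_zero_or_pos m with h | h
  · simp [h]
  · simp [Nat.pos_iff_ne_zero.mp h]

lemma sum_triangle_comm {M : Type*} [AddCommMonoid M] (n : ℕ) (f : ℕ → ℕ → M) :
    ∑ j ∈ range (n + 1), ∑ k ∈ range (n - j + 1), f j k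
      = ∑ k ∈ range (n + 1), ∑ j ∈ range (n - k + 1), f j k := by
  rw [Finset.sum_sigma', Finset.sum_sigma']
  refine sum_nbij' (fun x ↦ ⟨x.2, x.1⟩) (fun x ↦ ⟨x.2, x.1⟩) ?_ ?_ (fun _ _ ↦ rfl)
    (fun _ _ ↦ rfl) (fun _ _ ↦ rfl) <;>
  simp only [Finset.mem_range, Sigma.forall, Finset.mem_sigma] <;>
  rintro a b ⟨h₁, h₂⟩ <;> omega

theorem laguerre_sum_monomial (α x : ℝ) (i : ℕ) :
    ∑ j ∈ range (i + 1), gbinom ((j : ℝ) + α + 2) j * Lag (i - j) (-α - i - 3) (-x)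
      = x ^ i / i.factorial := by
  unfold Lag
  simp only [Finset.mul_sum]
  have expand : ∀ j ∈ range (i + 1), ∀ k ∈ range (i - j + 1),
      gbinom ((j : ℝ) + α + 2) j *
        ((-1 : ℝ) ^ k * poch ((-α - i - 3) + k + 1) (i - j - k) / (i - j - k).factorial
          * (-x) ^ k / k.factorial)
        = (gbinom ((α + 2) + j) j * gbinom (-(α + 2) - 1 - j) ((i - k) - j))
            * (x ^ k / k.factorial) := by
    intro j hj k hk
    have hji : j ≤ i := Nat.lt_succ_iff.mp (mem_range.mp hj)
    have hki : k ≤ i - j := Nat.lt_succ_iff.mp (mem_range.mp hk)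
    have hsub : i - j - k = i - k - j := by omega
    have hcast : ((i - k : ℕ) : ℝ) = (i : ℝ) - k := by
      rw [Nat.cast_sub (by omega)]
    rw [mul_div_assoc, mul_div_assoc, poch_div_factorial, hsub]
    have harg : (-α - i - 3) + k + 1 + ((i - k - j : ℕ) : ℝ) - 1
        = -(α + 2) - 1 - j := by
      rw [Nat.cast_sub (by omega : j ≤ i - k), hcast]; ring
    rw [harg, show ((j:ℝ) + α + 2) = (α + 2) + j by ring]
    have hx : ((-1:ℝ)) ^ k * (-x) ^ k = x ^ k := by
      rw [← mul_pow, neg_one_mul, neg_neg]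
    linear_combination (gbinom ((α+2) + (j:ℝ)) j * gbinom (-(α+2) - 1 - (j:ℝ)) (i - k - j)
      / (k.factorial : ℝ)) * hx
  rw [Finset.sum_congr rfl (fun j hj => Finset.sum_congr rfl (expand j hj))]
  rw [sum_triangle_comm]
  have inner : ∀ k ∈ range (i + 1),
      ∑ j ∈ range (i - k + 1),
        (gbinom ((α + 2) + j) j * gbinom (-(α + 2) - 1 - j) ((i - k) - j))
          * (x ^ k / k.factorial)
      = (if i - k = 0 then 1 else 0) * (x ^ k / k.factorial) := by
    intro k _
    rw [← Finset.sum_mul, key_s14 (α + 2) (i - k)]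
  rw [Finset.sum_congr rfl inner]
  rw [Finset.sum_eq_single_of_mem i (self_mem_range_succ i)]
  · simp
  · intro b hb hne
    have hb' : i - b ≠ 0 := by have := mem_range.mp hb; omega
    simp [hb']
end
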